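/- arXiv:2312.02245 — 2 statements merged into one kernel-verified Lean document; each statement's English description precedes it below -/
import Mathlib

section
/- The series ∑_{n=1}^∞ 1/(n² · C(2n,n)) converges to π²/18. -/
open Real Finset Nat MeasureTheory


lemma fact_prod (m k : ℕ) : (m ! * ∏ j ∈ range k, (m + 1 + j) : ℕ) = (m + k)! := by
  induction k with
  | zero => simp
  | succ k ih =>
    rw [Finset.prod_range_succ, ← Nat.mul_assoc, ih]
    rw [show m + (k+1) = (m + k) + 1 by ring, Nat.factorial_succ]
    ring

lemma beta_nat (m n : ℕ) :
    ∫ x in (0:ℝ)..1, x ^ m * (1 - x) ^ n = (m ! * n ! : ℕ) / ((m + n + 1)! : ℕ) := by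
  have h := Complex.betaIntegral_eval_nat_add_one_right (u := (m + 1 : ℂ)) (by simp; positivity) n
  rw [Complex.betaIntegral] at h
  have h2 : ∀ x : ℝ, ((x : ℂ)) ^ ((m:ℂ) + 1 - 1) * ((1:ℂ) - x) ^ ((n:ℂ) + 1 - 1)
      = ((x ^ m * (1 - x) ^ n : ℝ) : ℂ) := by
    intro x
    rw [add_sub_cancel_right, add_sub_cancel_right, Complex.cpow_natCast, Complex.cpow_natCast]
    push_cast
    ring
  simp_rw [h2] at h
  rw [intervalIntegral.integral_ofReal] at h
  have h3 : (∏ j ∈ range (n + 1), ((m:ℂ) + 1 + j)) = (((m + n + 1)! : ℕ) : ℂ) / ((m ! : ℕ) : ℂ) := by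
    have := fact_prod m (n + 1)
    have h4 : ((m ! * ∏ j ∈ range (n+1), (m + 1 + j) : ℕ) : ℂ) = (((m + (n+1))! : ℕ) : ℂ) := by
      exact_mod_cast congrArg (Nat.cast : ℕ → ℂ) this
    push_cast at h4 ⊢
    rw [show m+(n+1) = m+n+1 from by ring] at h4
    rw [eq_div_iff (by exact_mod_cast Nat.factorial_ne_zero m)]
    linear_combination h4
  rw [h3] at h
  have h5 : ((∫ x in (0:ℝ)..1, x ^ m * (1 - x) ^ n : ℝ) : ℂ)
      = ((m ! * n ! : ℕ) : ℂ) / (((m + n + 1)! : ℕ) : ℂ) := by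
    rw [h, div_div_eq_mul_div]
    push_cast
    ring
  rw [← Complex.ofReal_inj, h5]
  push_cast
  ring

lemma altSum : HasSum (fun n : ℕ => (-1:ℝ)^n / ((n:ℝ)+1)^2) (π^2/12) := by
  have h6 : HasSum (fun n : ℕ => (1:ℝ)/(n:ℝ)^2) (π^2/6) := hasSum_zeta_two
  have h1 : HasSum (fun n : ℕ => (1:ℝ)/((n:ℝ)+1)^2) (π^2/6) := by
    have : HasSum (fun n : ℕ => (1:ℝ)/((n+1:ℕ):ℝ)^2) (π^2/6) := by
      rw [hasSum_nat_add_iff (f := fun n : ℕ => (1:ℝ)/(n:ℝ)^2) 1]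
      simpa using h6
    convert this using 2 with n
    push_cast; ring
  have hodd : HasSum (fun n : ℕ => if Odd n then (1:ℝ)/((n:ℝ)+1)^2 else 0) (π^2/24) := by
    have hinj : Function.Injective (fun k : ℕ => 2*k+1) := by
      intro a b h; simpa using h
    rw [← Function.Injective.hasSum_iff hinj ?_]
    · have h4 := h1.mul_left (1/4)
      have hv : (1:ℝ)/4*(π^2/6) = π^2/24 := by ring
      rw [hv] at h4
      convert h4 using 2 with k
      · rfl
      simp only [Function.comp_apply]
      rw [if_pos ⟨k, by ring⟩]
      push_cast
      rw [div_eq_iff (by positivity)]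
      field_simp
      ring
    · intro n hn
      have hno : ¬ Odd n := by
        intro ⟨k, hk⟩
        exact hn ⟨k, by simp [hk, mul_comm]⟩
      simp [hno]
  have := h1.sub (hodd.mul_left 2)
  have h2 : π^2/6 - 2*(π^2/24) = π^2/12 := by ring
  rw [h2] at this
  convert this using 2 with n
  · rfl
  rcases Nat.even_or_odd n with he | ho
  · rw [if_neg (by simpa using he), Even.neg_one_pow he]
    ring
  · rw [if_pos ho, Odd.neg_one_pow ho]
    ring
lemma basel1 : HasSum (fun n : ℕ => (1:ℝ)/((n:ℝ)+1)^2) (π^2/6) := by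
  have h6 : HasSum (fun n : ℕ => (1:ℝ)/(n:ℝ)^2) (π^2/6) := hasSum_zeta_two
  have : HasSum (fun n : ℕ => (1:ℝ)/((n+1:ℕ):ℝ)^2) (π^2/6) := by
    rw [hasSum_nat_add_iff (f := fun n : ℕ => (1:ℝ)/(n:ℝ)^2) 1]
    simpa using h6
  convert this using 2 with n
  push_cast; ring

lemma ioo_eq (f : ℝ → ℝ) : ∫ x in Set.Ioo (0:ℝ) 1, f x = ∫ x in (0:ℝ)..1, f x := by
  rw [intervalIntegral.integral_of_le zero_le_one, MeasureTheory.integral_Ioc_eq_integral_Ioo]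

noncomputable def Ff (n : ℕ) : ℝ → ℝ := fun x => x^n * (1-x)^(n+1) / ((n:ℝ)+1)
noncomputable def Df (n : ℕ) : ℝ → ℝ := fun x => ((-1:ℝ)^n/((n:ℝ)+1)) * (x^n - x^(3*n+2))

lemma Ff_cont (n : ℕ) : Continuous (Ff n) := by unfold Ff; fun_prop
lemma Df_cont (n : ℕ) : Continuous (Df n) := by unfold Df; fun_prop

lemma Ff_int (n : ℕ) : IntegrableOn (Ff n) (Set.Ioo (0:ℝ) 1) := by
  exact ((Ff_cont n).integrableOn_Icc).mono_set Set.Ioo_subset_Icc_self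

lemma Df_int (n : ℕ) : IntegrableOn (Df n) (Set.Ioo (0:ℝ) 1) := by
  exact ((Df_cont n).integrableOn_Icc).mono_set Set.Ioo_subset_Icc_self

lemma Ff_val (n : ℕ) : ∫ x in Set.Ioo (0:ℝ) 1, Ff n x
    = 1/(((n:ℝ)+1)^2 * (Nat.choose (2*(n+1)) (n+1) : ℝ)) := by
  rw [ioo_eq]
  unfold Ff
  rw [intervalIntegral.integral_div, beta_nat n (n+1)]
  have hkey : Nat.choose (2*(n+1)) (n+1) * (n+1)! * (n+1)! = (2*(n+1))! := by
    have := Nat.choose_mul_factorial_mul_factorial (show n+1 ≤ 2*(n+1) by omega)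
    rw [show 2*(n+1) - (n+1) = n+1 by omega] at this
    exact this
  have h2 : n + (n+1) + 1 = 2*(n+1) := by omega
  rw [h2]
  have hC : (0:ℝ) < (Nat.choose (2*(n+1)) (n+1) : ℝ) := by
    exact_mod_cast Nat.choose_pos (show n+1 ≤ 2*(n+1) by omega)
  have hfac : (0:ℝ) < ((2*(n+1))! : ℝ) := by exact_mod_cast Nat.factorial_pos _
  have hn1 : (0:ℝ) < (n:ℝ) + 1 := by positivity
  rw [div_div, div_eq_div_iff (by positivity) (by positivity)]
  have hcast : ((Nat.choose (2*(n+1)) (n+1) : ℝ)) * ((n+1)! : ℝ) * ((n+1)! : ℝ)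
      = ((2*(n+1))! : ℝ) := by exact_mod_cast congrArg (Nat.cast : ℕ → ℝ) hkey
  have hfs : ((n+1)! : ℝ) = ((n:ℝ)+1) * (n ! : ℝ) := by
    rw [Nat.factorial_succ]; push_cast; ring
  push_cast [hfs] at hcast ⊢
  nlinarith [hcast, Nat.factorial_pos n, (show (0:ℝ) < (n ! : ℝ) by exact_mod_cast Nat.factorial_pos n)]

lemma Df_val (n : ℕ) : ∫ x in Set.Ioo (0:ℝ) 1, Df n x
    = (2/3) * ((-1:ℝ)^n/((n:ℝ)+1)^2) := by
  rw [ioo_eq]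
  unfold Df
  rw [intervalIntegral.integral_const_mul,
    intervalIntegral.integral_sub ((continuous_pow n).intervalIntegrable 0 1)
      ((continuous_pow (3*n+2)).intervalIntegrable 0 1),
    integral_pow, integral_pow]
  have h1 : ((0:ℝ)) ^ (n+1) = 0 := by simp
  have h2 : ((0:ℝ)) ^ (3*n+2+1) = 0 := by simp
  rw [h1, h2, one_pow, one_pow]
  have hn1 : ((n:ℝ)+1) ≠ 0 := by positivity
  have hn3 : ((3*n+2:ℕ):ℝ)+1 ≠ 0 := by positivity
  field_simp
  push_cast
  ring
-- pointwise series identities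
lemma hasSum_F {x : ℝ} (hx0 : 0 < x) (hx1 : x < 1) :
    HasSum (fun n => Ff n x) (-Real.log (1 - x*(1-x)) / x) := by
  have hy : |x*(1-x)| < 1 := by
    rw [abs_lt]; constructor <;> nlinarith
  have h := (hasSum_pow_div_log_of_abs_lt_one hy).div_const x
  convert h using 2 with n
  · rfl
  unfold Ff
  rw [mul_pow]
  field_simp
  ring

lemma hasSum_D {x : ℝ} (hx0 : 0 < x) (hx1 : x < 1) :
    HasSum (fun n => Df n x) (Real.log (1+x) / x - Real.log (1+x^3) / x) := by
  have hxne : x ≠ 0 := ne_of_gt hx0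
  have hG0 := (hasSum_pow_div_log_of_abs_lt_one (x := -x)
    (by rw [abs_neg, abs_of_pos hx0]; exact hx1)).div_const (-x)
  have hH0 := (hasSum_pow_div_log_of_abs_lt_one (x := -(x^3))
    (by rw [abs_neg, abs_of_pos (by positivity)]; exact pow_lt_one₀ (le_of_lt hx0) hx1 (by norm_num))).div_const (-x)
  rw [sub_neg_eq_add, neg_div_neg_eq] at hG0
  rw [sub_neg_eq_add, neg_div_neg_eq] at hH0
  have hG : HasSum (fun n : ℕ => (-1:ℝ)^n * x^n / ((n:ℝ)+1)) (Real.log (1+x) / x) := by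
    convert hG0 using 2 with n
    · rfl
    rw [show (-x) = (-1)*x by ring, mul_pow]
    field_simp
    ring
  have hH : HasSum (fun n : ℕ => (-1:ℝ)^n * x^(3*n+2) / ((n:ℝ)+1)) (Real.log (1+x^3) / x) := by
    convert hH0 using 2 with n
    · rfl
    rw [show (-(x^3)) = (-1)*x^3 by ring, mul_pow, ← pow_mul]
    rw [show 3*(n+1) = (3*n+2)+1 by ring]
    field_simp
    ring
  have := hG.sub hH
  convert this using 2 with n
  · rfl
  unfold Df
  ring

lemma tsum_eq {x : ℝ} (hx0 : 0 < x) (hx1 : x < 1) :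
    ∑' n, Ff n x = ∑' n, Df n x := by
  have hval : -Real.log (1 - x*(1-x)) / x
      = Real.log (1+x) / x - Real.log (1+x^3) / x := by
    have e1 : 1 - x*(1-x) = (1+x^3)/(1+x) := by
      field_simp
      ring
    rw [e1, Real.log_div (by positivity) (by positivity)]
    ring
  rw [(hasSum_F hx0 hx1).tsum_eq, (hasSum_D hx0 hx1).tsum_eq, hval]

theorem stmt1 :
    HasSum (fun n : ℕ => (1 : ℝ) / ((n + 1) ^ 2 * Nat.choose (2 * (n + 1)) (n + 1)))
      (π ^ 2 / 18) := by
  -- norm integrals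
  have hFnorm : ∀ n, ∫ x in Set.Ioo (0:ℝ) 1, ‖Ff n x‖ = ∫ x in Set.Ioo (0:ℝ) 1, Ff n x := by
    intro n
    apply setIntegral_congr_fun measurableSet_Ioo
    intro x hx
    apply Real.norm_of_nonneg
    have h1 : (0:ℝ) ≤ x := le_of_lt hx.1
    have h2 : (0:ℝ) ≤ 1 - x := by linarith [hx.2]
    unfold Ff
    positivity
  have hFsum : Summable (fun n => ∫ x in Set.Ioo (0:ℝ) 1, ‖Ff n x‖) := by
    apply Summable.of_nonneg_of_le
      (fun n => by rw [hFnorm n, Ff_val n]; positivity)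
      (fun n => ?_) basel1.summable
    rw [hFnorm n, Ff_val n]
    have hC : (1:ℝ) ≤ (Nat.choose (2*(n+1)) (n+1) : ℝ) := by
      exact_mod_cast Nat.choose_pos (show n+1 ≤ 2*(n+1) by omega)
    rw [div_le_div_iff₀ (by positivity) (by positivity)]
    nlinarith [sq_nonneg ((n:ℝ)+1)]
  have hDnormle : ∀ n, ∫ x in Set.Ioo (0:ℝ) 1, ‖Df n x‖ ≤ 1/((n:ℝ)+1)^2 := by
    intro n
    have hb : ∫ x in Set.Ioo (0:ℝ) 1, ‖Df n x‖
        ≤ ∫ x in Set.Ioo (0:ℝ) 1, x^n/((n:ℝ)+1) := by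
      apply setIntegral_mono_on (Df_int n).norm
        (((by fun_prop : Continuous (fun x : ℝ => x^n/((n:ℝ)+1))).integrableOn_Icc).mono_set
          Set.Ioo_subset_Icc_self) measurableSet_Ioo
      intro x hx
      unfold Df
      rw [norm_mul, norm_div, norm_pow, norm_neg, norm_one, one_pow]
      have h1 : (0:ℝ) < x := hx.1
      have hxle : x ≤ 1 := le_of_lt hx.2
      have hple : x^(3*n+2) ≤ x^n := by
        apply pow_le_pow_of_le_one (le_of_lt h1) hxle
        omega
      have hnn : (0:ℝ) ≤ x^n - x^(3*n+2) := by linarith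
      rw [Real.norm_of_nonneg hnn, Real.norm_of_nonneg (by positivity : (0:ℝ) ≤ ((n:ℝ)+1))]
      rw [div_mul_eq_mul_div, one_mul, div_le_div_iff₀ (by positivity) (by positivity)]
      nlinarith [pow_nonneg (le_of_lt h1) (3*n+2), pow_nonneg (le_of_lt h1) n]
    calc ∫ x in Set.Ioo (0:ℝ) 1, ‖Df n x‖ ≤ ∫ x in Set.Ioo (0:ℝ) 1, x^n/((n:ℝ)+1) := hb
      _ = 1/((n:ℝ)+1)^2 := by
          rw [ioo_eq, intervalIntegral.integral_div, integral_pow, one_pow,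
            zero_pow n.succ_ne_zero]
          push_cast
          field_simp
          ring
  have hDsum : Summable (fun n => ∫ x in Set.Ioo (0:ℝ) 1, ‖Df n x‖) := by
    apply Summable.of_nonneg_of_le
      (fun n => integral_nonneg (fun x => norm_nonneg _)) hDnormle basel1.summable
  have keyF := MeasureTheory.hasSum_integral_of_summable_integral_norm
    (μ := volume.restrict (Set.Ioo (0:ℝ) 1)) (F := Ff) Ff_int hFsum
  have keyD := MeasureTheory.hasSum_integral_of_summable_integral_norm
    (μ := volume.restrict (Set.Ioo (0:ℝ) 1)) (F := Df) Df_int hDsum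
  have hsum2 : HasSum (fun n => ∫ x in Set.Ioo (0:ℝ) 1, Df n x) (π^2/18) := by
    have := altSum.mul_left (2/3)
    rw [show (2:ℝ)/3 * (π^2/12) = π^2/18 by ring] at this
    convert this using 2 with n
    · rfl
    rw [Df_val n]
  have hcong : ∫ x in Set.Ioo (0:ℝ) 1, (∑' n, Ff n x)
      = ∫ x in Set.Ioo (0:ℝ) 1, (∑' n, Df n x) := by
    apply setIntegral_congr_fun measurableSet_Ioo
    intro x hx
    exact tsum_eq hx.1 hx.2
  have hT : ∫ x in Set.Ioo (0:ℝ) 1, (∑' n, Df n x) = π^2/18 := keyD.unique hsum2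
  rw [hcong, hT] at keyF
  convert keyF using 2 with n
  · rfl
  rw [Ff_val n]
end

section
/- For all x in (-1,1), (arcsin x)² = ∑_{n=1}^∞ v_n x^{2n}, where v_n = 2^{2n-1}((n-1)!)²/(2n)!. -/
open Real

noncomputable def cc (n : ℕ) : ℝ :=
  (2 : ℝ) ^ (2 * (n + 1) - 1) * (Nat.factorial n) ^ 2 / Nat.factorial (2 * (n + 1))

lemma cc_pos (n : ℕ) : 0 < cc n := by
  unfold cc
  positivity

lemma cc_rec (n : ℕ) :
    (2 * (n : ℝ) + 4) * (2 * n + 3) * cc (n + 1) = 4 * ((n : ℝ) + 1) ^ 2 * cc n := by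
  unfold cc
  have h1 : 2 * (n + 1 + 1) = (2 * (n + 1) + 1) + 1 := by ring
  have h2 : (2 * (n + 1) + 1) + 1 - 1 = (2 * (n + 1) - 1) + 2 := by omega
  rw [h1, h2, Nat.factorial_succ (2 * (n+1) + 1), Nat.factorial_succ (2 * (n+1)), Nat.factorial_succ n]
  push_cast
  have h3 : (Nat.factorial (2 * (n + 1)) : ℝ) ≠ 0 := by positivity
  field_simp
  ring

lemma cc_le_one (n : ℕ) : cc n ≤ 1 := by
  induction n with
  | zero => simp [cc, Nat.factorial]
  | succ n ih =>
    have h := cc_rec n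
    have hpos : (0 : ℝ) < (2 * (n : ℝ) + 4) * (2 * n + 3) := by positivity
    have : cc (n + 1) = 4 * ((n : ℝ) + 1) ^ 2 * cc n / ((2 * (n : ℝ) + 4) * (2 * n + 3)) := by
      field_simp
      linarith [h]
    rw [this]
    rw [div_le_one hpos]
    have hb : 4 * ((n : ℝ) + 1) ^ 2 ≤ (2 * (n : ℝ) + 4) * (2 * n + 3) := by nlinarith [Nat.cast_nonneg (α := ℝ) n]
    calc 4 * ((n : ℝ) + 1) ^ 2 * cc n ≤ 4 * ((n : ℝ) + 1) ^ 2 * 1 := by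
          have := cc_pos n
          nlinarith [Nat.cast_nonneg (α := ℝ) n]
      _ ≤ (2 * (n : ℝ) + 4) * (2 * n + 3) := by linarith

noncomputable def FF (y : ℝ) : ℝ := ∑' n : ℕ, cc n * y ^ (2 * (n + 1))
noncomputable def F1 (y : ℝ) : ℝ := ∑' n : ℕ, (2 * (n : ℝ) + 2) * cc n * y ^ (2 * n + 1)
noncomputable def F2 (y : ℝ) : ℝ :=
  ∑' n : ℕ, (2 * (n : ℝ) + 2) * (2 * (n : ℝ) + 1) * cc n * y ^ (2 * n)

lemma u_summable {q : ℝ} (hq : |q| < 1) :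
    Summable (fun n : ℕ => 12 * ((n : ℝ) + 1) ^ 2 * q ^ n) := by
  have hq' : ‖q‖ < 1 := by rwa [Real.norm_eq_abs]
  have h2 := summable_pow_mul_geometric_of_norm_lt_one (R := ℝ) 2 hq'
  have h1 := summable_pow_mul_geometric_of_norm_lt_one (R := ℝ) 1 hq'
  have h0 := summable_geometric_of_norm_lt_one hq'
  refine (((h2.add (h1.mul_left 2)).add h0).mul_left 12).congr fun n => ?_
  ring

lemma dom_summable {y : ℝ} (hy : |y| < 1) {f : ℕ → ℝ}
    (hf : ∀ n, ‖f n‖ ≤ 12 * ((n : ℝ) + 1) ^ 2 * |y| ^ n) : Summable f :=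
  Summable.of_norm_bounded (u_summable (by rwa [abs_abs])) hf

lemma pow_abs_le {y : ℝ} (hy : |y| < 1) {n m : ℕ} (hnm : n ≤ m) : |y| ^ m ≤ |y| ^ n :=
  pow_le_pow_of_le_one (abs_nonneg y) hy.le hnm

lemma bound_gen {y : ℝ} (hy : |y| < 1) (a : ℝ) (n m : ℕ) (ha : 0 ≤ a)
    (ha' : a ≤ 12 * ((n : ℝ) + 1) ^ 2) (hnm : n ≤ m) :
    ‖a * cc n * y ^ m‖ ≤ 12 * ((n : ℝ) + 1) ^ 2 * |y| ^ n := by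
  rw [norm_mul, norm_mul, Real.norm_eq_abs, Real.norm_eq_abs, Real.norm_eq_abs,
    abs_of_nonneg ha, abs_of_pos (cc_pos n), abs_pow]
  calc a * cc n * |y| ^ m ≤ a * cc n * |y| ^ n := by
        have h1 := pow_abs_le hy hnm
        have h2 : 0 ≤ a * cc n := mul_nonneg ha (cc_pos n).le
        exact mul_le_mul_of_nonneg_left h1 h2
    _ ≤ (12 * ((n : ℝ) + 1) ^ 2) * 1 * |y| ^ n := by
        gcongr
        · exact (cc_pos n).le
        · exact cc_le_one n
    _ = 12 * ((n : ℝ) + 1) ^ 2 * |y| ^ n := by ring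

lemma sumFF {y : ℝ} (hy : |y| < 1) : Summable (fun n : ℕ => cc n * y ^ (2 * (n + 1))) := by
  refine dom_summable hy fun n => ?_
  have := bound_gen hy 1 n (2 * (n + 1)) zero_le_one ?_ (by omega)
  · simpa using this
  · nlinarith [Nat.cast_nonneg (α := ℝ) n]

lemma sumF1 {y : ℝ} (hy : |y| < 1) :
    Summable (fun n : ℕ => (2 * (n : ℝ) + 2) * cc n * y ^ (2 * n + 1)) := by
  refine dom_summable hy fun n => ?_
  exact bound_gen hy _ n (2 * n + 1) (by positivity) (by nlinarith [Nat.cast_nonneg (α := ℝ) n]) (by omega)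

lemma sumF2 {y : ℝ} (hy : |y| < 1) :
    Summable (fun n : ℕ => (2 * (n : ℝ) + 2) * (2 * (n : ℝ) + 1) * cc n * y ^ (2 * n)) := by
  refine dom_summable hy fun n => ?_
  exact bound_gen hy _ n (2 * n) (by positivity) (by nlinarith [Nat.cast_nonneg (α := ℝ) n]) (by omega)

lemma hasDerivAt_term (n : ℕ) (y : ℝ) :
    HasDerivAt (fun z : ℝ => cc n * z ^ (2 * (n + 1)))
      ((2 * (n : ℝ) + 2) * cc n * y ^ (2 * n + 1)) y := by
  have h := (hasDerivAt_pow (2 * (n + 1)) y).const_mul (cc n)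
  refine h.congr_deriv ?_
  have he : 2 * (n + 1) - 1 = 2 * n + 1 := by omega
  rw [he]
  push_cast
  ring

lemma hasDerivAt_term1 (n : ℕ) (y : ℝ) :
    HasDerivAt (fun z : ℝ => (2 * (n : ℝ) + 2) * cc n * z ^ (2 * n + 1))
      ((2 * (n : ℝ) + 2) * (2 * (n : ℝ) + 1) * cc n * y ^ (2 * n)) y := by
  have h := (hasDerivAt_pow (2 * n + 1) y).const_mul ((2 * (n : ℝ) + 2) * cc n)
  refine h.congr_deriv ?_
  have he : 2 * n + 1 - 1 = 2 * n := by omega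
  rw [he]
  push_cast
  ring

lemma mem_interval {y : ℝ} (hy : y ∈ Set.Ioo (-1 : ℝ) 1) :
    ∃ q : ℝ, |y| < q ∧ q < 1 ∧ 0 < q := by
  have hy1 : |y| < 1 := abs_lt.2 ⟨hy.1, hy.2⟩
  refine ⟨(|y| + 1) / 2, by linarith, by linarith, by positivity⟩

lemma hasDerivAt_FF {y : ℝ} (hy : y ∈ Set.Ioo (-1 : ℝ) 1) : HasDerivAt FF (F1 y) y := by
  obtain ⟨q, hyq, hq1, hq0⟩ := mem_interval hy
  have hq1' : |q| < 1 := by rw [abs_of_pos hq0]; exact hq1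
  refine hasDerivAt_tsum_of_isPreconnected (u := fun n : ℕ => 12 * ((n : ℝ) + 1) ^ 2 * q ^ n)
    (u_summable hq1') isOpen_Ioo (convex_Ioo (-q) q).isPreconnected
    (fun n z _ => hasDerivAt_term n z) (fun n z hz => ?_) (y₀ := 0) ?_ ?_ ?_
  · have hz' : |z| < q := abs_lt.2 ⟨hz.1, hz.2⟩
    have hz1 : |z| < 1 := lt_trans hz' hq1
    calc ‖(2 * (n : ℝ) + 2) * cc n * z ^ (2 * n + 1)‖
        ≤ 12 * ((n : ℝ) + 1) ^ 2 * |z| ^ n :=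
          bound_gen hz1 _ n (2 * n + 1) (by positivity)
            (by nlinarith [Nat.cast_nonneg (α := ℝ) n]) (by omega)
      _ ≤ 12 * ((n : ℝ) + 1) ^ 2 * q ^ n := by
          gcongr
  · exact ⟨by linarith, hq0⟩
  · refine summable_zero.congr fun n => ?_
    rw [zero_pow (by omega : 2 * (n + 1) ≠ 0)]
    ring
  · exact abs_lt.1 hyq

lemma hasDerivAt_F1 {y : ℝ} (hy : y ∈ Set.Ioo (-1 : ℝ) 1) : HasDerivAt F1 (F2 y) y := by
  obtain ⟨q, hyq, hq1, hq0⟩ := mem_interval hy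
  have hq1' : |q| < 1 := by rw [abs_of_pos hq0]; exact hq1
  refine hasDerivAt_tsum_of_isPreconnected (u := fun n : ℕ => 12 * ((n : ℝ) + 1) ^ 2 * q ^ n)
    (u_summable hq1') isOpen_Ioo (convex_Ioo (-q) q).isPreconnected
    (fun n z _ => hasDerivAt_term1 n z) (fun n z hz => ?_) (y₀ := 0) ?_ ?_ ?_
  · have hz' : |z| < q := abs_lt.2 ⟨hz.1, hz.2⟩
    have hz1 : |z| < 1 := lt_trans hz' hq1
    calc ‖(2 * (n : ℝ) + 2) * (2 * (n : ℝ) + 1) * cc n * z ^ (2 * n)‖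
        ≤ 12 * ((n : ℝ) + 1) ^ 2 * |z| ^ n :=
          bound_gen hz1 _ n (2 * n) (by positivity)
            (by nlinarith [Nat.cast_nonneg (α := ℝ) n]) (by omega)
      _ ≤ 12 * ((n : ℝ) + 1) ^ 2 * q ^ n := by
          gcongr
  · exact ⟨by linarith, hq0⟩
  · refine summable_zero.congr fun n => ?_
    rw [zero_pow (by omega : 2 * n + 1 ≠ 0)]
    ring
  · exact abs_lt.1 hyq

lemma sumS1 {y : ℝ} (hy : |y| < 1) :
    Summable (fun n : ℕ => (2 * (n : ℝ) + 2) * cc n * y ^ (2 * (n + 1))) := by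
  refine dom_summable hy fun n => ?_
  exact bound_gen hy _ n (2 * (n + 1)) (by positivity)
    (by nlinarith [Nat.cast_nonneg (α := ℝ) n]) (by omega)

lemma sumS2 {y : ℝ} (hy : |y| < 1) :
    Summable (fun n : ℕ => (2 * (n : ℝ) + 2) * (2 * (n : ℝ) + 1) * cc n * y ^ (2 * (n + 1))) := by
  refine dom_summable hy fun n => ?_
  exact bound_gen hy _ n (2 * (n + 1)) (by positivity)
    (by nlinarith [Nat.cast_nonneg (α := ℝ) n]) (by omega)

lemma cc_zero : cc 0 = 1 := by
  norm_num [cc, Nat.factorial]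

lemma ode {y : ℝ} (hy : y ∈ Set.Ioo (-1 : ℝ) 1) : (1 - y ^ 2) * F2 y - y * F1 y = 2 := by
  have hy1 : |y| < 1 := abs_lt.2 ⟨hy.1, hy.2⟩
  have sA := sumF2 hy1
  have sB : Summable (fun n : ℕ => (2 * (n : ℝ) + 2) ^ 2 * cc n * y ^ (2 * (n + 1))) := by
    refine dom_summable hy1 fun n => ?_
    exact bound_gen hy1 _ n (2 * (n + 1)) (by positivity)
      (by nlinarith [Nat.cast_nonneg (α := ℝ) n]) (by omega)
  have hF2 : F2 y = 2 + ∑' n : ℕ, (2 * (n : ℝ) + 2) ^ 2 * cc n * y ^ (2 * (n + 1)) := by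
    rw [F2, Summable.tsum_eq_zero_add sA]
    congr 1
    · rw [cc_zero]; norm_num
    · refine tsum_congr fun n => ?_
      push_cast
      linear_combination y ^ (2 * (n + 1)) * cc_rec n
  have hmix : y ^ 2 * F2 y + y * F1 y
      = ∑' n : ℕ, (2 * (n : ℝ) + 2) ^ 2 * cc n * y ^ (2 * (n + 1)) := by
    have h1 : y ^ 2 * F2 y
        = ∑' n : ℕ, (2 * (n : ℝ) + 2) * (2 * (n : ℝ) + 1) * cc n * y ^ (2 * (n + 1)) := by
      rw [F2, ← tsum_mul_left]
      refine tsum_congr fun n => ?_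
      ring
    have h2 : y * F1 y = ∑' n : ℕ, (2 * (n : ℝ) + 2) * cc n * y ^ (2 * (n + 1)) := by
      rw [F1, ← tsum_mul_left]
      refine tsum_congr fun n => ?_
      ring
    rw [h1, h2, ← Summable.tsum_add (sumS2 hy1) (sumS1 hy1)]
    refine tsum_congr fun n => ?_
    ring
  have expand : (1 - y ^ 2) * F2 y - y * F1 y = F2 y - (y ^ 2 * F2 y + y * F1 y) := by ring
  rw [expand, hmix, hF2]
  ring

lemma const_of_deriv0 {f : ℝ → ℝ} {a b : ℝ} (h : ∀ t ∈ Set.Ioo a b, HasDerivAt f 0 t)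
    {x y : ℝ} (hx : x ∈ Set.Ioo a b) (hy : y ∈ Set.Ioo a b) : f x = f y := by
  refine (convex_Ioo a b).is_const_of_fderivWithin_eq_zero (𝕜 := ℝ)
    (fun t ht => ((h t ht).differentiableAt).differentiableWithinAt) (fun t ht => ?_) hx hy
  have hF : HasFDerivAt f (0 : ℝ →L[ℝ] ℝ) t := by
    have := hasDerivAt_iff_hasFDerivAt.mp (h t ht)
    rw [show ContinuousLinearMap.toSpanSingleton ℝ (0 : ℝ) = 0 by ext; simp] at this
    exact this
  exact hF.hasFDerivWithinAt.fderivWithin (isOpen_Ioo.uniqueDiffWithinAt ht)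

lemma sin_mem {t : ℝ} (ht : t ∈ Set.Ioo (-(π / 2)) (π / 2)) :
    Real.sin t ∈ Set.Ioo (-1 : ℝ) 1 := by
  have h1 : Real.sin (-(π / 2)) < Real.sin t := by
    apply Real.strictMonoOn_sin ⟨le_refl _, by linarith [Real.pi_div_two_pos]⟩
      ⟨ht.1.le, ht.2.le⟩ ht.1
  have h2 : Real.sin t < Real.sin (π / 2) := by
    apply Real.strictMonoOn_sin ⟨ht.1.le, ht.2.le⟩
      ⟨by linarith [Real.pi_div_two_pos], le_refl _⟩ ht.2
  rw [Real.sin_pi_div_two] at h2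
  rw [Real.sin_neg, Real.sin_pi_div_two] at h1
  exact ⟨h1, h2⟩

lemma F1_zero : F1 0 = 0 := by
  rw [F1]
  have h : ∀ n : ℕ, (2 * (n : ℝ) + 2) * cc n * (0 : ℝ) ^ (2 * n + 1) = 0 := fun n => by
    rw [zero_pow (by omega : 2 * n + 1 ≠ 0)]; ring
  rw [tsum_congr h, tsum_zero]

lemma FF_zero : FF 0 = 0 := by
  rw [FF]
  have h : ∀ n : ℕ, cc n * (0 : ℝ) ^ (2 * (n + 1)) = 0 := fun n => by
    rw [zero_pow (by omega : 2 * (n + 1) ≠ 0)]; ring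
  rw [tsum_congr h, tsum_zero]

lemma zero_mem_I : (0 : ℝ) ∈ Set.Ioo (-(π / 2)) (π / 2) :=
  ⟨by linarith [Real.pi_div_two_pos], Real.pi_div_two_pos⟩

lemma G1_eq_zero {t : ℝ} (ht : t ∈ Set.Ioo (-(π / 2)) (π / 2)) :
    F1 (Real.sin t) * Real.cos t - 2 * t = 0 := by
  have key : ∀ s ∈ Set.Ioo (-(π / 2)) (π / 2),
      HasDerivAt (fun s : ℝ => F1 (Real.sin s) * Real.cos s - 2 * s) 0 s := by
    intro s hs
    have hmem := sin_mem hs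
    have h1 : HasDerivAt (fun z : ℝ => F1 (Real.sin z)) (F2 (Real.sin s) * Real.cos s) s :=
      (hasDerivAt_F1 hmem).comp s (Real.hasDerivAt_sin s)
    have h2 := h1.mul (Real.hasDerivAt_cos s)
    have h3 : HasDerivAt (fun z : ℝ => 2 * z) 2 s := by
      simpa using (hasDerivAt_id s).const_mul (2 : ℝ)
    have h4 := h2.sub h3
    refine h4.congr_deriv ?_
    have he1 := ode hmem
    have he2 := Real.sin_sq_add_cos_sq s
    linear_combination he1 + F2 (Real.sin s) * he2
  have := const_of_deriv0 key ht zero_mem_I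
  simpa [F1_zero] using this

lemma FF_sin {t : ℝ} (ht : t ∈ Set.Ioo (-(π / 2)) (π / 2)) : FF (Real.sin t) = t ^ 2 := by
  have key : ∀ s ∈ Set.Ioo (-(π / 2)) (π / 2),
      HasDerivAt (fun s : ℝ => FF (Real.sin s) - s ^ 2) 0 s := by
    intro s hs
    have hmem := sin_mem hs
    have h1 : HasDerivAt (fun z : ℝ => FF (Real.sin z)) (F1 (Real.sin s) * Real.cos s) s :=
      (hasDerivAt_FF hmem).comp s (Real.hasDerivAt_sin s)
    have h2 := h1.sub (hasDerivAt_pow 2 s)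
    refine h2.congr_deriv ?_
    have := G1_eq_zero hs
    push_cast
    linarith
  have := const_of_deriv0 key ht zero_mem_I
  simp only [Real.sin_zero, FF_zero] at this
  linarith [this]

theorem stmt3 (x : ℝ) (hx : x ∈ Set.Ioo (-1 : ℝ) 1) :
    HasSum (fun n : ℕ =>
        ((2 : ℝ) ^ (2 * (n + 1) - 1) * (Nat.factorial n) ^ 2 /
          Nat.factorial (2 * (n + 1))) * x ^ (2 * (n + 1)))
      (Real.arcsin x ^ 2) := by
  have hx1 : |x| < 1 := abs_lt.2 ⟨hx.1, hx.2⟩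
  have ht : Real.arcsin x ∈ Set.Ioo (-(π / 2)) (π / 2) :=
    ⟨Real.neg_pi_div_two_lt_arcsin.2 hx.1, Real.arcsin_lt_pi_div_two.2 hx.2⟩
  have hFF : FF x = Real.arcsin x ^ 2 := by
    have := FF_sin ht
    rwa [Real.sin_arcsin hx.1.le hx.2.le] at this
  have hs := (sumFF hx1).hasSum
  rw [show (∑' n : ℕ, cc n * x ^ (2 * (n + 1))) = FF x from rfl, hFF] at hs
  exact hs
end
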